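/- arXiv:2302.09674 — 4 statements merged into one kernel-verified Lean document; each statement's English description precedes it below -/
import Mathlib

section
/- Let φ: E₁ → E₀ be a separable isogeny of elliptic curves defined over a finite field k, and let P ∈ E₀(k̄). Suppose all points of ker φ are defined over k(P). Then there exists a point F ∈ ker φ such that for every point Q ∈ φ⁻¹(P) and every natural number n, πⁿ(Q) = Q + nF, where π denotes the k(P)-Frobenius endomorphism on E₁. -/
open WeierstrassCurve WeierstrassCurve.Affine IntermediateField
open scoped Classical

noncomputable section

/-- The algebraic closure of `k`, where points of our curves live. -/
abbrev kbar (k : Type) [Field k] := AlgebraicClosure k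

variable {k : Type} [Field k]

/-- The field of definition `k(P)` of a point `P` on a Weierstrass curve, as an
intermediate field of `k̄/k`: the subfield generated by the coordinates of `P`. -/
def ptField (W : WeierstrassCurve k) : (W⁄(kbar k)).Point → IntermediateField k (kbar k)
  | .zero => ⊥
  | .some (x := x) (y := y) _ => adjoin k {x, y}

/-- The degree `[E⊔F : E]` of the compositum of two intermediate fields over the first;
when `E ≤ E⊔F = F` this is the degree `[F : E]`. -/
def extDeg {k K : Type*} [Field k] [Field K] [Algebra k K]
    (E F : IntermediateField k K) : ℕ :=
  Module.finrank E (IntermediateField.extendScalars (le_sup_left : E ≤ E ⊔ F))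

/-- A separable isogeny of degree `ℓ` between (the groups of `k̄`-points of) two
Weierstrass curves defined over a finite field `k`, encoded by its action on points:
a surjective group homomorphism, commuting with the Galois action (defined over `k`),
whose kernel has exactly `ℓ` elements (for an isogeny of degree `ℓ`, separability is
equivalent to the kernel having `ℓ` geometric points). -/
structure SepIsogeny (W₁ W₀ : WeierstrassCurve k) (ℓ : ℕ) : Type where
  hom : (W₁⁄(kbar k)).Point →+ (W₀⁄(kbar k)).Point
  surj : Function.Surjective hom
  card_ker : Nat.card hom.ker = ℓ
  equivariant : ∀ σ : kbar k →ₐ[k] kbar k, ∀ P, hom (Point.map (W' := W₁) σ P) = Point.map (W' := W₀) σ (hom P)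

end
/-- **Frobenius-translation lemma.** Let `φ : E₁ → E₀` be a separable
isogeny over a finite field `k` and `P ∈ E₀(k̄)`.  If all points of `ker φ` are defined
over `k(P)`, then there is `F ∈ ker φ` such that `πⁿ(Q) = Q + n•F` for every
`Q ∈ φ⁻¹(P)` and all `n`, where `π` (induced by `σ : x ↦ x^#k(P)`) is the
`k(P)`-Frobenius on `E₁`. -/
theorem frobenius_translation {k : Type} [Field k] [Fintype k]
    {W₁ W₀ : WeierstrassCurve k} {ℓ : ℕ} (φ : SepIsogeny W₁ W₀ ℓ) (P : (W₀⁄(kbar k)).Point)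
    (hker : ∀ F ∈ φ.hom.ker, ptField W₁ F ≤ ptField W₀ P)
    (σ : kbar k →ₐ[k] kbar k) (hσ : ∀ a, σ a = a ^ Nat.card (ptField W₀ P)) :
    ∃ F ∈ φ.hom.ker, ∀ Q : (W₁⁄(kbar k)).Point, φ.hom Q = P →
      ∀ n : ℕ, (fun R => WeierstrassCurve.Affine.Point.map (W' := W₁) σ R)^[n] Q = Q + n • F := by
  classical
  set L := ptField W₀ P with hL
  -- k(P) is a finite field of cardinality `Nat.card L`
  have hfd : FiniteDimensional k L := by
    rw [hL]
    cases P with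
    | zero => exact (inferInstance : FiniteDimensional k (⊥ : IntermediateField k (kbar k)))
    | some h =>
      apply IntermediateField.finiteDimensional_adjoin
      intro x _
      exact Algebra.IsIntegral.isIntegral x
  have hfin : Finite L := Module.finite_of_finite k
  have hfix : ∀ a : kbar k, a ∈ L → σ a = a := by
    intro a ha
    have : Fintype L := Fintype.ofFinite L
    have key : (⟨a, ha⟩ : L) ^ Nat.card L = ⟨a, ha⟩ := by
      rw [Nat.card_eq_fintype_card]
      exact FiniteField.pow_card _
    have := congrArg (Subtype.val) key
    push_cast at this
    rw [hσ a]
    exact this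
  -- points with field of definition inside L are fixed by σ
  have hfixpt : ∀ (W : WeierstrassCurve k) (R : (W⁄(kbar k)).Point), ptField W R ≤ L →
      Point.map (W' := W) σ R = R := by
    intro W R hR
    cases R with
    | zero => rfl
    | @some x y h =>
      have hx : σ x = x := hfix x (hR (IntermediateField.subset_adjoin k _ (by simp)))
      have hy : σ y = y := hfix y (hR (IntermediateField.subset_adjoin k _ (by simp)))
      rw [Point.map_some]
      simp only [Point.some.injEq]
      exact ⟨hx, hy⟩
  have hPfix : Point.map (W' := W₀) σ P = P := hfixpt W₀ P le_rfl
  obtain ⟨Q₀, hQ₀⟩ := φ.surj P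
  refine ⟨Point.map (W' := W₁) σ Q₀ - Q₀, ?_, ?_⟩
  · have : φ.hom (Point.map (W' := W₁) σ Q₀) = P := by
      rw [φ.equivariant σ Q₀, hQ₀, hPfix]
    simp [AddMonoidHom.mem_ker, map_sub, this, hQ₀]
  · intro Q hQ n
    set F : (W₁⁄(kbar k)).Point := Point.map (W' := W₁) σ Q₀ - Q₀ with hF
    have hFker : φ.hom F ∈ (⊥ : AddSubgroup (W₀⁄(kbar k)).Point) := by
      have : φ.hom (Point.map (W' := W₁) σ Q₀) = P := by
        rw [φ.equivariant σ Q₀, hQ₀, hPfix]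
      simp [hF, map_sub, this, hQ₀]
    have hFmem : F ∈ φ.hom.ker := by simpa [AddMonoidHom.mem_ker] using hFker
    have hFfix : Point.map (W' := W₁) σ F = F := hfixpt W₁ F (hker F hFmem)
    have hTmem : Q - Q₀ ∈ φ.hom.ker := by
      simp [AddMonoidHom.mem_ker, map_sub, hQ, hQ₀]
    have hTfix : Point.map (W' := W₁) σ (Q - Q₀) = Q - Q₀ := hfixpt W₁ _ (hker _ hTmem)
    have hstep : Point.map (W' := W₁) σ Q = Q + F := by
      have : Point.map (W' := W₁) σ Q = Point.map (W' := W₁) σ (Q - Q₀) + Point.map (W' := W₁) σ Q₀ := by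
        rw [← map_add, sub_add_cancel]
      rw [this, hTfix, hF]
      abel
    induction n with
    | zero => simp [zero_nsmul]
    | succ n ih =>
      rw [Function.iterate_succ_apply', ih, map_add, hstep, map_nsmul, hFfix,
        succ_nsmul]
      abel
end

section
/- With notation as in the Frobenius-translation lemma: if Q ∈ φ⁻¹(P) and F ∈ ker φ satisfies π(Q) = Q + F with πⁿ(Q) = Q + nF for all n, then the degree of the field extension [k(Q) : k(P)] equals the order of F in the group E₁(k̄). -/
open WeierstrassCurve WeierstrassCurve.Affine IntermediateField
open scoped Classical

section Aux

variable {k : Type} [Field k] [Fintype k]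

/-- The field of definition of a point is finite dimensional over `k`. -/
lemma ptField_finiteDimensional (W : WeierstrassCurve k) (C : (W⁄(kbar k)).Point) :
    FiniteDimensional k (ptField W C) := by
  cases C with
  | zero => exact (inferInstance : FiniteDimensional k (⊥ : IntermediateField k (kbar k)))
  | some h =>
    exact finiteDimensional_adjoin fun z _ => Algebra.IsIntegral.isIntegral z

lemma iterate_point_map (W : WeierstrassCurve k) (σ : kbar k →ₐ[k] kbar k) (n : ℕ)
    (R : (W⁄(kbar k)).Point) :
    (fun R => WeierstrassCurve.Affine.Point.map (W' := W) σ R)^[n] R = Point.map (W' := W) (σ ^ n) R := by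
  induction n generalizing R with
  | zero => cases R <;> rfl
  | succ n ih =>
    rw [Function.iterate_succ_apply', ih, Point.map_map, pow_succ']; rfl

end Aux

/-- With notation as in the Frobenius-translation lemma: if
`Q ∈ φ⁻¹(P)` and `F ∈ ker φ` satisfy `π(Q) = Q + F`, with `πⁿ(Q) = Q + n•F` for all
`n`, then `[k(Q) : k(P)]` equals the order of `F` in `E₁(k̄)`. -/
theorem degree_eq_orderOf_translation {k : Type} [Field k] [Fintype k]
    {W₁ W₀ : WeierstrassCurve k} {ℓ : ℕ} (φ : SepIsogeny W₁ W₀ ℓ) (P : (W₀⁄(kbar k)).Point)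
    (hker : ∀ F ∈ φ.hom.ker, ptField W₁ F ≤ ptField W₀ P)
    (σ : kbar k →ₐ[k] kbar k) (hσ : ∀ a, σ a = a ^ Nat.card (ptField W₀ P))
    (Q : (W₁⁄(kbar k)).Point) (hQ : φ.hom Q = P) (F : (W₁⁄(kbar k)).Point) (hF : F ∈ φ.hom.ker)
    (hπ : WeierstrassCurve.Affine.Point.map (W' := W₁) σ Q = Q + F)
    (hπn : ∀ n : ℕ, (fun R => WeierstrassCurve.Affine.Point.map (W' := W₁) σ R)^[n] Q = Q + n • F) :
    extDeg (ptField W₀ P) (ptField W₁ Q) = addOrderOf F := by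
  classical
  set E := ptField W₀ P with hE
  set q := Nat.card E with hqdef
  haveI hEfd : FiniteDimensional k E := ptField_finiteDimensional W₀ P
  haveI : Finite E := Module.finite_of_finite k
  letI : Fintype E := Fintype.ofFinite E
  have hqcard : q = Fintype.card E := Nat.card_eq_fintype_card
  have hq1 : 1 < q := hqcard ▸ Fintype.one_lt_card
  -- σ fixes E pointwise
  have hfixE : ∀ a ∈ E, σ a = a := by
    intro a ha
    rw [hσ a]
    have h1 : (⟨a, ha⟩ : E) ^ q = ⟨a, ha⟩ := by
      rw [hqcard]; exact FiniteField.pow_card _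
    calc a ^ q = ((((⟨a, ha⟩ : E) ^ q : E)) : kbar k) := by push_cast; rfl
      _ = a := by rw [h1]
  -- power of σ is power of Frobenius
  have hσpow : ∀ (n : ℕ) (a : kbar k), (σ ^ n) a = a ^ q ^ n := by
    intro n
    induction n with
    | zero => intro a; simp
    | succ n ih =>
      intro a
      rw [pow_succ', AlgHom.mul_apply, ih, hσ, ← pow_mul, ← pow_succ]
  -- powers of σ fix E pointwise
  have hfixEpow : ∀ (n : ℕ), ∀ a ∈ E, (σ ^ n) a = a := by
    intro n
    induction n with
    | zero => intro a _; simp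
    | succ n ih =>
      intro a ha
      rw [pow_succ, AlgHom.mul_apply, hfixE a ha, ih a ha]
  cases Q with
  | zero =>
    have hF0 : F = 0 := by
      have h0 : Point.map (W' := W₁) σ (Point.zero) = Point.zero := rfl
      rw [h0, ← Point.zero_def] at hπ
      exact (left_eq_add.mp hπ)
    have hbot : extDeg E (⊥ : IntermediateField k (kbar k)) = 1 := by
      unfold extDeg
      rw [IntermediateField.finrank_eq_one_iff]
      ext a
      rw [mem_extendScalars, IntermediateField.mem_bot]
      constructor
      · intro ha
        rw [sup_bot_eq] at ha
        exact ⟨⟨a, ha⟩, rfl⟩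
      · rintro ⟨e, rfl⟩
        exact (le_sup_left : E ≤ E ⊔ ⊥) e.2
    rw [hF0, addOrderOf_zero]
    exact hbot
  | @some x y hns =>
    have hxmem : x ∈ adjoin k ({x, y} : Set (kbar k)) :=
      subset_adjoin k _ (Set.mem_insert x {y})
    have hymem : y ∈ adjoin k ({x, y} : Set (kbar k)) :=
      subset_adjoin k _ (Set.mem_insert_of_mem x rfl)
    haveI : FiniteDimensional k (adjoin k ({x, y} : Set (kbar k))) :=
      finiteDimensional_adjoin fun z _ => Algebra.IsIntegral.isIntegral z
    haveI hsupfd : FiniteDimensional k ↥(E ⊔ adjoin k ({x, y} : Set (kbar k))) :=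
      IntermediateField.finiteDimensional_sup _ _
    haveI hsupfin : Finite ↥(E ⊔ adjoin k ({x, y} : Set (kbar k))) := Module.finite_of_finite k
    set Lf := IntermediateField.extendScalars
      (le_sup_left : E ≤ E ⊔ adjoin k ({x, y} : Set (kbar k))) with hLf
    haveI hLfin : Finite Lf := hsupfin
    letI : Fintype Lf := Fintype.ofFinite Lf
    set d := Module.finrank E Lf with hd
    haveI : Module.Finite ↥E ↥Lf := Module.Finite.of_finite
    have hcardL : Fintype.card Lf = Fintype.card E ^ d := Module.card_eq_pow_finrank (K := ↥E) (V := ↥Lf)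
    have hdpos : 0 < d := Module.finrank_pos
    -- σ ^ d fixes the compositum pointwise
    have hfixLd : ∀ z ∈ E ⊔ adjoin k ({x, y} : Set (kbar k)), (σ ^ d) z = z := by
      intro z hz
      rw [hσpow]
      have h1 : (⟨z, hz⟩ : Lf) ^ q ^ d = ⟨z, hz⟩ := by
        rw [hqcard, ← hcardL]; exact FiniteField.pow_card _
      calc z ^ q ^ d = ((((⟨z, hz⟩ : Lf) ^ q ^ d : Lf)) : kbar k) := by push_cast; rfl
        _ = z := by rw [h1]
    have hmapd : Point.map (W' := W₁) (σ ^ d) (Point.some _ _ hns) = Point.some _ _ hns := by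
      rw [Point.map_some]
      simp only [Point.some.injEq]
      exact ⟨hfixLd x ((le_sup_right : adjoin k ({x, y} : Set (kbar k)) ≤ E ⊔ _) hxmem),
        hfixLd y ((le_sup_right : adjoin k ({x, y} : Set (kbar k)) ≤ E ⊔ _) hymem)⟩
    have hdF : d • F = 0 := by
      have h1 := hπn d
      rw [iterate_point_map, hmapd] at h1
      exact (left_eq_add.mp h1)
    have hford : IsOfFinAddOrder F := isOfFinAddOrder_iff_nsmul_eq_zero.mpr ⟨d, hdpos, hdF⟩
    have hmpos : 0 < addOrderOf F := hford.addOrderOf_pos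
    have hdvd : addOrderOf F ∣ d := addOrderOf_dvd_of_nsmul_eq_zero hdF
    set m := addOrderOf F with hm
    -- σ ^ m fixes the coordinates of Q
    have hπm : Point.map (W' := W₁) (σ ^ m) (Point.some _ _ hns) = Point.some _ _ hns := by
      have h1 := hπn m
      rw [iterate_point_map, addOrderOf_nsmul_eq_zero, add_zero] at h1
      exact h1
    have hfxy : (σ ^ m) x = x ∧ (σ ^ m) y = y := by
      rw [Point.map_some] at hπm
      simpa only [Point.some.injEq] using hπm
    -- σ ^ m fixes the whole compositum pointwise
    have hfixLm : ∀ z ∈ E ⊔ adjoin k ({x, y} : Set (kbar k)), (σ ^ m) z = z := by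
      have hAinv : ∀ z ∈ AlgHom.equalizer (σ ^ m) (AlgHom.id k (kbar k)), z⁻¹ ∈
          AlgHom.equalizer (σ ^ m) (AlgHom.id k (kbar k)) := by
        intro z hz
        have hz' : (σ ^ m) z = z := hz
        show (σ ^ m) z⁻¹ = z⁻¹
        rw [map_inv₀, hz']
      set Sfix : IntermediateField k (kbar k) :=
        (AlgHom.equalizer (σ ^ m) (AlgHom.id k (kbar k))).toIntermediateField hAinv with hS
      have hle : E ⊔ adjoin k ({x, y} : Set (kbar k)) ≤ Sfix := by
        apply sup_le
        · intro z hz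
          exact hfixEpow m z hz
        · rw [adjoin_le_iff]
          rintro z (rfl | rfl)
          · exact hfxy.1
          · exact hfxy.2
      intro z hz
      exact hle hz
    -- card bound
    have hroot : ∀ a : Lf, a ^ q ^ m = a := by
      intro a
      have h1 := hfixLm a a.2
      rw [hσpow] at h1
      exact Subtype.ext (by push_cast; exact h1)
    have hqm1 : 1 < q ^ m := Nat.one_lt_pow hmpos.ne' hq1
    set p : Polynomial Lf := Polynomial.X ^ (q ^ m) - Polynomial.X with hp
    have hdeg : p.degree = (q ^ m : ℕ) := by
      rw [hp, Polynomial.degree_sub_eq_left_of_degree_lt, Polynomial.degree_X_pow]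
      rw [Polynomial.degree_X_pow, Polynomial.degree_X]
      exact_mod_cast hqm1
    have hpne : p ≠ 0 := by
      intro h
      rw [h, Polynomial.degree_zero] at hdeg
      exact WithBot.bot_ne_coe hdeg
    have hroots : ∀ a : Lf, a ∈ p.roots := by
      intro a
      rw [Polynomial.mem_roots hpne]
      show p.eval a = 0
      rw [hp]
      simp [hroot a]
    have hcard_le : Fintype.card Lf ≤ q ^ m := by
      calc Fintype.card Lf = (Finset.univ : Finset Lf).card := rfl
        _ ≤ p.roots.toFinset.card :=
            Finset.card_le_card (fun a _ => Multiset.mem_toFinset.mpr (hroots a))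
        _ ≤ Multiset.card p.roots := Multiset.toFinset_card_le _
        _ ≤ p.natDegree := p.card_roots'
        _ = q ^ m := Polynomial.natDegree_eq_of_degree_eq_some hdeg
    have hdm : d ≤ m := by
      rw [← Nat.pow_le_pow_iff_right hq1]
      calc q ^ d = Fintype.card Lf := by rw [hcardL, hqcard]
        _ ≤ q ^ m := hcard_le
    show extDeg E (adjoin k ({x, y} : Set (kbar k))) = m
    exact le_antisymm hdm (Nat.le_of_dvd hdpos hdvd)
end

section
/- Over the field 𝔽₃, exactly 2/3 of the monic irreducible polynomials of degree 2 f satisfy that all iterates T^k(f) are irreducible, where T(f)(x) = x^{deg f} · f((x²+1)/x). Concretely: of the 3 monic irreducible quadratics over 𝔽₃, exactly 2 yield irreducible families under iteration of T. -/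
open Polynomial

/-- The Q-transform `T(f) = x^(deg f) · f((x²+1)/x)`. -/
noncomputable def Qtransform {F : Type*} [Field F] (f : F[X]) : F[X] :=
  ∑ i ∈ Finset.range (f.natDegree + 1),
    C (f.coeff i) * (X ^ 2 + 1) ^ i * X ^ (f.natDegree - i)

lemma aeval_Qtransform {F L : Type*} [Field F] [Field L] [Algebra F L] (f : F[X]) {α : L}
    (hα : α ≠ 0) :
    aeval α (Qtransform f) = α ^ f.natDegree * aeval (α + α⁻¹) f := by
  rw [Qtransform, map_sum, Polynomial.aeval_eq_sum_range, Finset.mul_sum]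
  refine Finset.sum_congr rfl fun i hi => ?_
  rw [Finset.mem_range] at hi
  have hin : i ≤ f.natDegree := Nat.lt_succ_iff.mp hi
  have key : α ^ 2 + 1 = α * (α + α⁻¹) := by
    field_simp
  rw [map_mul, map_mul, map_pow, map_pow, aeval_X, aeval_C, map_add, map_pow, aeval_X, map_one,
    key, mul_pow, Algebra.smul_def]
  rw [show α ^ f.natDegree = α ^ i * α ^ (f.natDegree - i) by
    rw [← pow_add]; congr 1; omega]
  ring

lemma natDegree_Qtransform_term_le {F : Type*} [Field F] (f : F[X]) (i : ℕ) (hin : i ≤ f.natDegree) :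
    (C (f.coeff i) * (X ^ 2 + 1) ^ i * X ^ (f.natDegree - i) : F[X]).natDegree
      ≤ f.natDegree + i := by
  have h1 : ((X:F[X]) ^ 2 + 1).natDegree = 2 := by compute_degree!
  calc (C (f.coeff i) * (X ^ 2 + 1) ^ i * X ^ (f.natDegree - i) : F[X]).natDegree
      ≤ (C (f.coeff i) * (X ^ 2 + 1) ^ i).natDegree + (X ^ (f.natDegree - i) : F[X]).natDegree :=
        natDegree_mul_le
    _ ≤ ((C (f.coeff i)).natDegree + ((X ^ 2 + 1 : F[X]) ^ i).natDegree) + (f.natDegree - i) := by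
        gcongr
        · exact natDegree_mul_le
        · exact (natDegree_X_pow _).le
    _ ≤ (0 + 2 * i) + (f.natDegree - i) := by
        gcongr
        · exact (natDegree_C _).le
        · exact natDegree_pow_le.trans (by rw [h1]; ring_nf; exact le_rfl)
    _ ≤ f.natDegree + i := by omega

lemma monic_Qtransform {F : Type*} [Field F] {f : F[X]} (hm : f.Monic) :
    (Qtransform f).Monic ∧ (Qtransform f).natDegree = 2 * f.natDegree := by
  have hX : ((X:F[X]) ^ 2 + 1).Monic := by
    apply monic_X_pow_add
    simpa using (by norm_num : (1:ℕ) ≤ 2)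
  have hmon : ((X ^ 2 + 1 : F[X]) ^ f.natDegree).Monic := hX.pow _
  have hdeg : ((X ^ 2 + 1 : F[X]) ^ f.natDegree).natDegree = 2 * f.natDegree := by
    rw [natDegree_pow]
    have : ((X:F[X]) ^ 2 + 1).natDegree = 2 := by compute_degree!
    rw [this]; ring
  have hcoeff : (Qtransform f).coeff (2 * f.natDegree) = 1 := by
    rw [Qtransform, finset_sum_coeff]
    rw [Finset.sum_eq_single f.natDegree]
    · rw [hm.coeff_natDegree, C_1, one_mul, Nat.sub_self, pow_zero, mul_one]
      rw [← hdeg]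
      exact hmon.coeff_natDegree
    · intro i hi hne
      rw [Finset.mem_range] at hi
      have hlt : i < f.natDegree := by omega
      apply coeff_eq_zero_of_natDegree_lt
      exact lt_of_le_of_lt (natDegree_Qtransform_term_le f i (by omega)) (by omega)
    · intro h
      exact absurd (Finset.self_mem_range_succ _) h
  have hle : (Qtransform f).natDegree ≤ 2 * f.natDegree := by
    apply natDegree_sum_le_of_forall_le
    intro i hi
    rw [Finset.mem_range] at hi
    exact (natDegree_Qtransform_term_le f i (by omega)).trans (by omega)
  have hne : Qtransform f ≠ 0 := fun h => by simp [h] at hcoeff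
  have hdeg' : (Qtransform f).natDegree = 2 * f.natDegree := by
    refine le_antisymm hle (le_natDegree_of_ne_zero ?_)
    rw [hcoeff]; exact one_ne_zero
  exact ⟨by rw [Monic, leadingCoeff, hdeg', hcoeff], hdeg'⟩

lemma monic_dvd_eq {R : Type*} [CommRing R] [IsDomain R] {p q : R[X]} (hp : p.Monic)
    (hq : q.Monic) (hdvd : p ∣ q) (hdeg : q.natDegree ≤ p.natDegree) : p = q := by
  obtain ⟨c, hc⟩ := hdvd
  have hc0 : c ≠ 0 := by rintro rfl; rw [mul_zero] at hc; exact hq.ne_zero hc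
  have hdeg' : q.natDegree = p.natDegree + c.natDegree := by
    rw [hc, natDegree_mul hp.ne_zero hc0]
  have hcd : c.natDegree = 0 := by omega
  obtain ⟨a, rfl⟩ := natDegree_eq_zero.mp hcd
  have : a = 1 := by
    have := hq.leadingCoeff
    rw [hc, leadingCoeff_mul, hp.leadingCoeff, one_mul, leadingCoeff_C] at this
    exact this
  rw [hc, this, C_1, mul_one]

lemma two_eq_neg_one_zmod3 : (2 : ZMod 3) = -1 := by decide

set_option maxHeartbeats 1600000 in
set_option synthInstance.maxHeartbeats 1000000 in
lemma step_irreducible {f : (ZMod 3)[X]} (hm : f.Monic) (hirr : Irreducible f)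
    (hpos : f.natDegree ≠ 0) (hval : f.eval 1 * f.eval (-1) = 2) :
    Irreducible (Qtransform f) := by
  have hf0 : f ≠ 0 := hm.ne_zero
  set n := f.natDegree with hn
  haveI : Fact (Irreducible f) := ⟨hirr⟩
  haveI : Fact (Nat.Prime 3) := ⟨by norm_num⟩
  set K := AdjoinRoot f with hK
  haveI : Module.Finite (ZMod 3) K :=
    Module.Finite.of_basis (AdjoinRoot.powerBasis hf0).basis
  haveI : Fintype K := Module.fintypeOfFintype (AdjoinRoot.powerBasis hf0).basis
  have hrank : Module.finrank (ZMod 3) K = n := by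
    rw [(AdjoinRoot.powerBasis hf0).finrank, AdjoinRoot.powerBasis_dim]
  have hcard : Fintype.card K = 3 ^ n := by
    rw [Module.card_eq_pow_finrank (K := ZMod 3) (V := K), ZMod.card, hrank]
  haveI : CharP K 3 := charP_of_injective_algebraMap (algebraMap (ZMod 3) K).injective 3
  set β := AdjoinRoot.root f with hβdef
  have hβ : aeval β f = 0 := by rw [AdjoinRoot.aeval_eq, AdjoinRoot.mk_self]
  -- cubing
  have hcube : ∀ (x : K) (p : (ZMod 3)[X]), aeval (x ^ 3) p = (aeval x p) ^ 3 := by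
    intro x p
    have hc : (frobenius K 3).comp (algebraMap (ZMod 3) K) = algebraMap (ZMod 3) K :=
      RingHom.ext fun c => by
        rw [RingHom.comp_apply, frobenius_def, ← map_pow, ZMod.pow_card]
    calc aeval (x ^ 3) p = eval₂ (algebraMap (ZMod 3) K) (frobenius K 3 x) p := by
          rw [aeval_def, frobenius_def]
      _ = eval₂ ((frobenius K 3).comp (algebraMap (ZMod 3) K)) (frobenius K 3 x) p := by rw [hc]
      _ = frobenius K 3 (eval₂ (algebraMap (ZMod 3) K) x p) := (Polynomial.hom_eval₂ _ _ _ _).symm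
      _ = (aeval x p) ^ 3 := by rw [aeval_def, frobenius_def]
  have hγroot : ∀ i : ℕ, aeval (β ^ 3 ^ i) f = 0 := by
    intro i
    induction i with
    | zero => simpa using hβ
    | succ i ih =>
        rw [pow_succ, pow_mul, hcube, ih, zero_pow (by norm_num)]
  -- fixed points of iterated frobenius
  have hfix : ∀ m : ℕ, β ^ 3 ^ m = β → ∀ x : K, x ^ 3 ^ m = x := by
    intro m hβm
    have h3 : (3:ℕ).Prime := by norm_num
    let S : Subalgebra (ZMod 3) K :=
      { carrier := {x : K | x ^ 3 ^ m = x}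
        mul_mem' := fun {a b} ha hb => by
          simp only [Set.mem_setOf_eq] at *
          rw [mul_pow, ha, hb]
        one_mem' := by simp
        add_mem' := fun {a b} ha hb => by
          simp only [Set.mem_setOf_eq] at *
          rw [add_pow_char_pow, ha, hb]
        zero_mem' := by
          simp only [Set.mem_setOf_eq]
          exact zero_pow (by positivity)
        algebraMap_mem' := fun c => by
          simp only [Set.mem_setOf_eq]
          rw [← map_pow, ZMod.pow_card_pow] }
    have hle : Algebra.adjoin (ZMod 3) ({β} : Set K) ≤ S :=
      Algebra.adjoin_le (Set.singleton_subset_iff.mpr hβm)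
    rw [AdjoinRoot.adjoinRoot_eq_top] at hle
    intro x
    exact hle (Algebra.mem_top (x := x))
  have hnofix : ∀ m : ℕ, 0 < m → m < n → ¬ (β ^ 3 ^ m = β) := by
    intro m hm0 hmn hβm
    have hall := hfix m hβm
    set p : K[X] := X ^ 3 ^ m - X with hp
    have h3m : 3 ≤ 3 ^ m := by
      calc 3 = 3 ^ 1 := (pow_one 3).symm
        _ ≤ 3 ^ m := Nat.pow_le_pow_right (by norm_num) hm0
    have hpl : p.natDegree = 3 ^ m := by
      rw [hp, natDegree_sub_eq_left_of_natDegree_lt, natDegree_X_pow]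
      rw [natDegree_X_pow, natDegree_X]; omega
    have hp0 : p ≠ 0 := fun h => by
      rw [h, natDegree_zero] at hpl; omega
    have hsub : (Finset.univ : Finset K) ⊆ p.roots.toFinset := by
      intro x _
      rw [Multiset.mem_toFinset, mem_roots hp0]
      simp [hp, IsRoot, hall x]
    have hcount : Fintype.card K ≤ 3 ^ m := by
      calc Fintype.card K = (Finset.univ : Finset K).card := rfl
        _ ≤ p.roots.toFinset.card := Finset.card_le_card hsub
        _ ≤ Multiset.card p.roots := p.roots.toFinset_card_le
        _ ≤ p.natDegree := p.card_roots'
        _ = 3 ^ m := hpl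
    rw [hcard] at hcount
    exact absurd hcount
      (Nat.not_le.mpr (Nat.pow_lt_pow_right (by norm_num) hmn))
  -- injectivity of conjugates
  have hinj : ∀ i ∈ Finset.range n, ∀ j ∈ Finset.range n,
      β ^ 3 ^ i = β ^ 3 ^ j → i = j := by
    have key : ∀ i j : ℕ, i < j → j < n → β ^ 3 ^ i = β ^ 3 ^ j → False := by
      intro i j hij hjn heq
      have h1 : (β ^ 3 ^ i) ^ 3 ^ (n - j) = (β ^ 3 ^ j) ^ 3 ^ (n - j) := by rw [heq]
      rw [← pow_mul, ← pow_mul, ← pow_add, ← pow_add] at h1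
      have h2 : j + (n - j) = n := by omega
      rw [h2] at h1
      have h3 : β ^ 3 ^ n = β := by rw [← hcard]; exact FiniteField.pow_card β
      rw [h3] at h1
      exact hnofix (i + (n - j)) (by omega) (by omega) h1
    intro i hi j hj heq
    rw [Finset.mem_range] at hi hj
    rcases lt_trichotomy i j with h | h | h
    · exact absurd (key i j h hj heq) not_false
    · exact h
    · exact absurd (key j i h hi heq.symm) not_false
  -- the factorization of f over K
  have hfmap0 : f.map (algebraMap (ZMod 3) K) ≠ 0 := by
    simpa using hf0
  have hmapf : f.map (algebraMap (ZMod 3) K)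
      = ∏ i ∈ Finset.range n, (X - C (β ^ 3 ^ i)) := by
    have hnodup : ((Finset.range n).val.map (fun i => β ^ 3 ^ i)).Nodup :=
      Multiset.Nodup.map_on (fun i hi j hj => hinj i hi j hj) (Finset.range n).nodup
    have hsub : ((Finset.range n).val.map (fun i => β ^ 3 ^ i))
        ⊆ (f.map (algebraMap (ZMod 3) K)).roots := by
      intro x hx
      obtain ⟨i, hi, rfl⟩ := Multiset.mem_map.mp hx
      rw [mem_roots hfmap0]
      show eval (β ^ 3 ^ i) (f.map (algebraMap (ZMod 3) K)) = 0
      rw [eval_map, ← aeval_def, hγroot i]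
    have hle := (Multiset.le_iff_subset hnodup).2 hsub
    have hdvd : (∏ i ∈ Finset.range n, (X - C (β ^ 3 ^ i)))
        ∣ f.map (algebraMap (ZMod 3) K) := by
      have h := (Multiset.prod_X_sub_C_dvd_iff_le_roots hfmap0 _).2 hle
      rw [Multiset.map_map] at h
      exact h
    refine (monic_dvd_eq (monic_prod_of_monic _ _ fun i _ => monic_X_sub_C _)
      (hm.map _) hdvd ?_).symm
    rw [natDegree_map]
    have : (∏ i ∈ Finset.range n, (X - C (β ^ 3 ^ i))).natDegree
        = ∑ i ∈ Finset.range n, 1 := by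
      rw [natDegree_prod _ _ fun i _ => X_sub_C_ne_zero _]
      exact Finset.sum_congr rfl fun i _ => natDegree_X_sub_C _
    rw [this, Finset.sum_const, smul_eq_mul, mul_one, Finset.card_range]
  -- the nonsquare
  have hgeom : 2 * (∑ i ∈ Finset.range n, 3 ^ i) + 1 = 3 ^ n := by
    induction n with
    | zero => simp
    | succ k ih =>
        rw [Finset.sum_range_succ, pow_succ]
        ring_nf
        ring_nf at ih
        omega
  set z : K := β ^ 2 - 1 with hzdef
  have hz : z ^ (Fintype.card K / 2) = -1 := by
    have hdiv : Fintype.card K / 2 = ∑ i ∈ Finset.range n, 3 ^ i := by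
      rw [hcard]; omega
    rw [hdiv, ← Finset.prod_pow_eq_pow_sum]
    have hterm : ∀ i : ℕ, z ^ 3 ^ i = (β ^ 3 ^ i) ^ 2 - 1 := by
      intro i
      rw [hzdef, sub_pow_char_pow, one_pow, ← pow_mul, mul_comm 2 (3 ^ i), pow_mul]
    have he1 : eval 1 (f.map (algebraMap (ZMod 3) K))
        = ∏ i ∈ Finset.range n, (1 - β ^ 3 ^ i) := by
      rw [hmapf, eval_prod]
      exact Finset.prod_congr rfl fun i _ => by simp
    have he2 : eval (-1) (f.map (algebraMap (ZMod 3) K))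
        = ∏ i ∈ Finset.range n, (-1 - β ^ 3 ^ i) := by
      rw [hmapf, eval_prod]
      exact Finset.prod_congr rfl fun i _ => by simp
    have hprod : ∏ i ∈ Finset.range n, z ^ 3 ^ i
        = (∏ i ∈ Finset.range n, (1 - β ^ 3 ^ i))
          * ∏ i ∈ Finset.range n, (-1 - β ^ 3 ^ i) := by
      rw [← Finset.prod_mul_distrib]
      exact Finset.prod_congr rfl fun i _ => by rw [hterm i]; ring
    rw [hprod, ← he1, ← he2]
    have hev1 : eval 1 (f.map (algebraMap (ZMod 3) K))
        = algebraMap (ZMod 3) K (f.eval 1) := by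
      conv_lhs => rw [show (1:K) = algebraMap (ZMod 3) K 1 from (map_one _).symm]
      rw [eval_map, eval₂_at_apply]
    have hev2 : eval (-1) (f.map (algebraMap (ZMod 3) K))
        = algebraMap (ZMod 3) K (f.eval (-1)) := by
      conv_lhs => rw [show (-1:K) = algebraMap (ZMod 3) K (-1) from by rw [map_neg, map_one]]
      rw [eval_map, eval₂_at_apply]
    rw [hev1, hev2, ← map_mul, hval]
    rw [two_eq_neg_one_zmod3, map_neg, map_one]
  have hcard3 : 3 ≤ Fintype.card K := by
    rw [hcard]
    calc 3 = 3 ^ 1 := (pow_one 3).symm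
      _ ≤ 3 ^ n := Nat.pow_le_pow_right (by norm_num) (by omega)
  have hz0 : z ≠ 0 := by
    intro h
    rw [h, zero_pow (by omega)] at hz
    exact zero_ne_one (neg_eq_zero.mp hz.symm ▸ rfl : (1:K) = 0).symm
  have hnsq : ¬ IsSquare z := by
    intro hsq
    rw [FiniteField.isSquare_iff (by rw [ringChar.eq K 3]; norm_num) hz0, hz] at hsq
    haveI : Fact (2 < 3) := ⟨by norm_num⟩
    exact CharP.neg_one_ne_one K 3 hsq
  -- the quadratic over K
  set g : K[X] := X ^ 2 - C β * X + 1 with hgdef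
  have hgdeg : g.natDegree = 2 := by
    rw [hgdef]
    compute_degree!
  have hgmonic : g.Monic := by
    rw [Monic, leadingCoeff, hgdeg, hgdef]
    simp [coeff_one, coeff_C_mul]
  have h3 : (3 : K) = 0 := by
    have := CharP.cast_eq_zero K 3
    simpa using this
  have hgirr : Irreducible g := by
    rw [hgmonic.irreducible_iff_roots_eq_zero_of_degree_le_three (by omega) (by omega)]
    rw [Multiset.eq_zero_iff_forall_notMem]
    intro x hx
    rw [mem_roots hgmonic.ne_zero] at hx
    have hx' : 1 * (x * x) + (-β) * x + 1 = 0 := by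
      have : eval x g = 0 := hx
      rw [hgdef] at this
      simp only [eval_add, eval_sub, eval_pow, eval_mul, eval_X, eval_C, eval_one] at this
      linear_combination this
    refine quadratic_ne_zero_of_discrim_ne_sq (fun s hs => hnsq ?_) x hx'
    rw [discrim] at hs
    refine ⟨s, ?_⟩
    rw [hzdef]
    linear_combination hs + h3
  haveI : Fact (Irreducible g) := ⟨hgirr⟩
  have hg0 : g ≠ 0 := hgmonic.ne_zero
  set L := AdjoinRoot g with hLdef
  haveI : Module.Finite K L := Module.Finite.of_basis (AdjoinRoot.powerBasis hg0).basis
  haveI : Module.Finite (ZMod 3) L := Module.Finite.trans K L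
  have hrankKL : Module.finrank K L = 2 := by
    rw [(AdjoinRoot.powerBasis hg0).finrank, AdjoinRoot.powerBasis_dim, hgdeg]
  set α := AdjoinRoot.root g with hαdef
  have hgα : α ^ 2 - algebraMap K L β * α + 1 = 0 := by
    have h := AdjoinRoot.aeval_eq (f := g) g
    rw [AdjoinRoot.mk_self] at h
    rw [hgdef] at h
    simp only [map_add, map_sub, map_pow, map_mul, aeval_X, aeval_C, map_one] at h
    rw [← hαdef] at h
    linear_combination h
  have hαne : α ≠ 0 := by
    intro h
    rw [h] at hgα
    simp at hgα
  have hβα : algebraMap K L β = α + α⁻¹ := by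
    have h1 : α * α⁻¹ = 1 := mul_inv_cancel₀ hαne
    linear_combination (-α⁻¹) * hgα - (algebraMap K L β - α) * h1
  have hTf0 : aeval α (Qtransform f) = 0 := by
    rw [aeval_Qtransform f hαne, ← hβα, Polynomial.aeval_algebraMap_apply, hβ, map_zero, mul_zero]
  have hβS : algebraMap K L β ∈ IntermediateField.adjoin (ZMod 3) ({α} : Set L) := by
    rw [hβα]
    exact add_mem (IntermediateField.mem_adjoin_simple_self _ _)
      (inv_mem (IntermediateField.mem_adjoin_simple_self _ _))
  have hKS : ∀ k : K, algebraMap K L k ∈ IntermediateField.adjoin (ZMod 3) ({α} : Set L) := by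
    intro k
    induction k using AdjoinRoot.induction_on with
    | ih q =>
      rw [← AdjoinRoot.aeval_eq, ← hβdef, ← Polynomial.aeval_algebraMap_apply]
      have hmem : aeval (algebraMap K L β) q
          ∈ Algebra.adjoin (ZMod 3) ({algebraMap K L β} : Set L) := by
        rw [Algebra.adjoin_singleton_eq_range_aeval]
        exact ⟨q, rfl⟩
      have hle : Algebra.adjoin (ZMod 3) ({algebraMap K L β} : Set L)
          ≤ (IntermediateField.adjoin (ZMod 3) ({α} : Set L)).toSubalgebra :=
        Algebra.adjoin_le (Set.singleton_subset_iff.mpr hβS)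
      exact hle hmem
  have htop : IntermediateField.adjoin (ZMod 3) ({α} : Set L) = ⊤ := by
    rw [eq_top_iff]
    intro x _
    induction x using AdjoinRoot.induction_on with
    | ih p =>
      rw [← AdjoinRoot.aeval_eq, ← hαdef, Polynomial.aeval_eq_sum_range]
      refine Subalgebra.sum_mem _ fun i _ => ?_
      rw [Algebra.smul_def]
      exact mul_mem (hKS _)
        (pow_mem (IntermediateField.mem_adjoin_simple_self _ _) i)
  have hint : IsIntegral (ZMod 3) α := IsIntegral.of_finite _ _
  have hmindeg : (minpoly (ZMod 3) α).natDegree = 2 * n := by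
    rw [← IntermediateField.adjoin.finrank hint]
    rw [show (IntermediateField.adjoin (ZMod 3) {α}) = ⊤ from htop]
    rw [IntermediateField.finrank_top']
    rw [← Module.finrank_mul_finrank (ZMod 3) K L, hrank, hrankKL]
    ring
  have hdvd : minpoly (ZMod 3) α ∣ Qtransform f := minpoly.dvd _ _ hTf0
  obtain ⟨hQmon, hQdeg⟩ := monic_Qtransform hm
  have heq : minpoly (ZMod 3) α = Qtransform f :=
    monic_dvd_eq (minpoly.monic hint) hQmon hdvd (by omega)
  rw [← heq]
  exact minpoly.irreducible hint

lemma eval_Qtransform {F : Type*} [Field F] (f : F[X]) {x : F} (hx : x ≠ 0) :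
    eval x (Qtransform f) = x ^ f.natDegree * eval (x + x⁻¹) f := by
  have h := aeval_Qtransform (L := F) f hx
  simpa [aeval_def, eval₂_eq_eval_map, Polynomial.map_id] using h

/-- The invariant propagated along the iteration. -/
def QInv (f : (ZMod 3)[X]) : Prop :=
  f.Monic ∧ Irreducible f ∧ Even f.natDegree ∧ f.natDegree ≠ 0 ∧
    f.eval 1 * f.eval (-1) = 2

lemma step_full {f : (ZMod 3)[X]} (h : QInv f) : QInv (Qtransform f) := by
  obtain ⟨hm, hirr, heven, hpos, hval⟩ := h
  obtain ⟨hQm, hQd⟩ := monic_Qtransform hm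
  refine ⟨hQm, step_irreducible hm hirr hpos hval, by rw [hQd]; exact even_two_mul _,
    by omega, ?_⟩
  have hinv : ((-1 : ZMod 3))⁻¹ = -1 := by
    rw [inv_eq_of_mul_eq_one_right]; decide
  have h1 : (1:ZMod 3) + 1⁻¹ = -1 := by rw [inv_one]; decide
  have h2 : (-1:ZMod 3) + (-1)⁻¹ = 1 := by rw [hinv]; decide
  have hne : (-1 : ZMod 3) ≠ 0 := by decide
  rw [eval_Qtransform f one_ne_zero, eval_Qtransform f hne, h1, h2, one_pow,
    Even.neg_one_pow heven, one_mul, one_mul, mul_comm]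
  exact hval

lemma family {f : (ZMod 3)[X]} (h : QInv f) (k : ℕ) : Irreducible (Qtransform^[k] f) := by
  have main : ∀ m : ℕ, ∀ g : (ZMod 3)[X], QInv g → QInv (Qtransform^[m] g) := by
    intro m
    induction m with
    | zero => intro g hg; simpa using hg
    | succ m ih =>
        intro g hg
        rw [Function.iterate_succ_apply']
        exact step_full (ih g hg)
  exact (main k f h).2.1

lemma quad_repr {f : (ZMod 3)[X]} (hm : f.Monic) (hdeg : f.natDegree = 2) :
    f = X ^ 2 + C (f.coeff 1) * X + C (f.coeff 0) := by
  have h3 : f.natDegree < 3 := by omega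
  conv_lhs => rw [Polynomial.as_sum_range' f 3 h3]
  rw [Finset.sum_range_succ, Finset.sum_range_succ, Finset.sum_range_one]
  have hc2 : f.coeff 2 = 1 := by rw [← hdeg]; exact hm.coeff_natDegree
  rw [hc2, ← Polynomial.C_mul_X_pow_eq_monomial, ← Polynomial.C_mul_X_pow_eq_monomial,
    ← Polynomial.C_mul_X_pow_eq_monomial]
  simp only [map_one, one_mul, pow_zero, pow_one]
  ring

lemma quad_irr {a b : ZMod 3} (h : ∀ x : ZMod 3, x ^ 2 + a * x + b ≠ 0) :
    (X ^ 2 + C a * X + C b : (ZMod 3)[X]).Monic ∧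
    (X ^ 2 + C a * X + C b : (ZMod 3)[X]).natDegree = 2 ∧
    Irreducible (X ^ 2 + C a * X + C b : (ZMod 3)[X]) := by
  have hdeg : (X ^ 2 + C a * X + C b : (ZMod 3)[X]).natDegree = 2 := by compute_degree!
  have hmon : (X ^ 2 + C a * X + C b : (ZMod 3)[X]).Monic := by
    rw [Monic, leadingCoeff, hdeg]
    simp [coeff_C, coeff_X, coeff_C_mul]
  refine ⟨hmon, hdeg, ?_⟩
  rw [hmon.irreducible_iff_roots_eq_zero_of_degree_le_three (by omega) (by omega)]
  rw [Multiset.eq_zero_iff_forall_notMem]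
  intro x hx
  rw [mem_roots hmon.ne_zero] at hx
  have : eval x (X ^ 2 + C a * X + C b : (ZMod 3)[X]) = 0 := hx
  simp only [eval_add, eval_pow, eval_mul, eval_X, eval_C] at this
  exact h x this

lemma no_root_of_root_free {f : (ZMod 3)[X]} (hm : f.Monic) (hirr : Irreducible f)
    (hdeg : f.natDegree = 2) :
    ∀ x : ZMod 3, x ^ 2 + f.coeff 1 * x + f.coeff 0 ≠ 0 := by
  intro x hx
  have hroots := (hm.irreducible_iff_roots_eq_zero_of_degree_le_three
    (by omega) (by omega)).mp hirr
  have hxr : x ∈ f.roots := by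
    rw [mem_roots hm.ne_zero]
    show eval x f = 0
    conv_lhs => rw [quad_repr hm hdeg]
    simp only [eval_add, eval_pow, eval_mul, eval_X, eval_C]
    exact hx
  rw [hroots] at hxr
  simp at hxr

lemma mem_three {f : (ZMod 3)[X]} (hm : f.Monic) (hirr : Irreducible f)
    (hdeg : f.natDegree = 2) :
    f = X ^ 2 + C 0 * X + C 1 ∨ f = X ^ 2 + C 1 * X + C 2 ∨
      f = X ^ 2 + C 2 * X + C 2 := by
  have hrepr := quad_repr hm hdeg
  have hnoroot := no_root_of_root_free hm hirr hdeg
  have hcases : ∀ c : ZMod 3, c = 0 ∨ c = 1 ∨ c = 2 := by decide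
  rcases hcases (f.coeff 1) with h1 | h1 | h1 <;>
    rcases hcases (f.coeff 0) with h0 | h0 | h0 <;>
    rw [h1, h0] at hrepr hnoroot <;>
    first
      | (with_reducible exact Or.inl hrepr)
      | (with_reducible exact Or.inr (Or.inl hrepr))
      | (with_reducible exact Or.inr (Or.inr hrepr))
      | (exact absurd hnoroot (by decide))

lemma three_eq_zero_polyzmod : (3 : (ZMod 3)[X]) = 0 := by
  have h : (3 : ZMod 3) = 0 := by decide
  calc (3 : (ZMod 3)[X]) = C 3 := (map_ofNat C 3).symm
    _ = C 0 := by rw [h]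
    _ = 0 := map_zero C

lemma p1_fails :
    ¬ ∀ k : ℕ, Irreducible (Qtransform^[k] (X ^ 2 + C 0 * X + C 1 : (ZMod 3)[X])) := by
  intro hall
  have h1 := hall 1
  rw [Function.iterate_one] at h1
  have hdeg : (X ^ 2 + C 0 * X + C 1 : (ZMod 3)[X]).natDegree = 2 := by
    simp only [map_zero, zero_mul, add_zero, map_one]
    compute_degree!
  have hc0 : (X ^ 2 + C 0 * X + C 1 : (ZMod 3)[X]).coeff 0 = 1 := by
    simp [coeff_C, coeff_one]
  have hc1 : (X ^ 2 + C 0 * X + C 1 : (ZMod 3)[X]).coeff 1 = 0 := by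
    simp [coeff_C, coeff_one]
  have hc2 : (X ^ 2 + C 0 * X + C 1 : (ZMod 3)[X]).coeff 2 = 1 := by
    simp [coeff_C, coeff_one]
  have hT : Qtransform (X ^ 2 + C 0 * X + C 1 : (ZMod 3)[X])
      = (X ^ 2 + C 1 * X + C 2) * (X ^ 2 + C 2 * X + C 2) := by
    rw [Qtransform, hdeg, Finset.sum_range_succ, Finset.sum_range_succ, Finset.sum_range_one,
      hc0, hc1, hc2]
    simp only [map_zero, map_one, zero_mul, mul_zero, zero_add, add_zero, one_mul, mul_one,
      pow_zero, pow_one, map_ofNat]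
    linear_combination (-(X:(ZMod 3)[X]) ^ 3 - X ^ 2 - 2 * X - 1) * three_eq_zero_polyzmod
  rw [hT] at h1
  have hd1 : (X ^ 2 + C 1 * X + C 2 : (ZMod 3)[X]).natDegree = 2 := by
    compute_degree!
  have hd2 : (X ^ 2 + C 2 * X + C 2 : (ZMod 3)[X]).natDegree = 2 := by
    compute_degree!
  rcases h1.isUnit_or_isUnit rfl with h | h
  · have := natDegree_eq_zero_of_isUnit h
    omega
  · have := natDegree_eq_zero_of_isUnit h
    omega

/-- Over `𝔽₃` there are exactly 3 monic irreducible quadratics, and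
exactly 2 of them yield irreducible families under iteration of the Q-transform
(density 2/3). -/
theorem density_deg_two_F3 :
    Nat.card {f : (ZMod 3)[X] // f.Monic ∧ Irreducible f ∧ f.natDegree = 2} = 3 ∧
    Nat.card {f : (ZMod 3)[X] // f.Monic ∧ Irreducible f ∧ f.natDegree = 2 ∧
      ∀ k : ℕ, Irreducible (Qtransform^[k] f)} = 2 := by
  have h1 := quad_irr (a := 0) (b := 1) (by decide)
  have h2 := quad_irr (a := 1) (b := 2) (by decide)
  have h3 := quad_irr (a := 2) (b := 2) (by decide)
  have hcoeff1 : ∀ a b : ZMod 3, (X ^ 2 + C a * X + C b : (ZMod 3)[X]).coeff 1 = a := by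
    intro a b
    simp [coeff_C, coeff_one]
  have hne12 : (X ^ 2 + C 0 * X + C 1 : (ZMod 3)[X]) ≠ X ^ 2 + C 1 * X + C 2 := by
    intro h
    have := congrArg (fun q => q.coeff 1) h
    simp only [hcoeff1] at this
    exact absurd this (by decide)
  have hne13 : (X ^ 2 + C 0 * X + C 1 : (ZMod 3)[X]) ≠ X ^ 2 + C 2 * X + C 2 := by
    intro h
    have := congrArg (fun q => q.coeff 1) h
    simp only [hcoeff1] at this
    exact absurd this (by decide)
  have hne23 : (X ^ 2 + C 1 * X + C 2 : (ZMod 3)[X]) ≠ X ^ 2 + C 2 * X + C 2 := by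
    intro h
    have := congrArg (fun q => q.coeff 1) h
    simp only [hcoeff1] at this
    exact absurd this (by decide)
  have hfam : ∀ a b : ZMod 3,
      (X ^ 2 + C a * X + C b : (ZMod 3)[X]).Monic →
      Irreducible (X ^ 2 + C a * X + C b : (ZMod 3)[X]) →
      (X ^ 2 + C a * X + C b : (ZMod 3)[X]).natDegree = 2 →
      eval 1 (X ^ 2 + C a * X + C b : (ZMod 3)[X])
        * eval (-1) (X ^ 2 + C a * X + C b : (ZMod 3)[X]) = 2 →
      ∀ k : ℕ, Irreducible (Qtransform^[k] (X ^ 2 + C a * X + C b : (ZMod 3)[X])) := by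
    intro a b hm hirr hdeg hval k
    exact family ⟨hm, hirr, by rw [hdeg]; exact ⟨1, rfl⟩, by omega, hval⟩ k
  have hev2 : eval 1 (X ^ 2 + C 1 * X + C 2 : (ZMod 3)[X])
      * eval (-1) (X ^ 2 + C 1 * X + C 2 : (ZMod 3)[X]) = 2 := by
    simp only [eval_add, eval_pow, eval_mul, eval_X, eval_C]
    decide
  have hev3 : eval 1 (X ^ 2 + C 2 * X + C 2 : (ZMod 3)[X])
      * eval (-1) (X ^ 2 + C 2 * X + C 2 : (ZMod 3)[X]) = 2 := by
    simp only [eval_add, eval_pow, eval_mul, eval_X, eval_C]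
    decide
  constructor
  · have hA : {f : (ZMod 3)[X] | f.Monic ∧ Irreducible f ∧ f.natDegree = 2}
        = {X ^ 2 + C 0 * X + C 1, X ^ 2 + C 1 * X + C 2, X ^ 2 + C 2 * X + C 2} := by
      ext q
      simp only [Set.mem_setOf_eq, Set.mem_insert_iff, Set.mem_singleton_iff]
      constructor
      · rintro ⟨hm, hirr, hdeg⟩
        exact mem_three hm hirr hdeg
      · rintro (rfl | rfl | rfl)
        exacts [⟨h1.1, h1.2.2, h1.2.1⟩, ⟨h2.1, h2.2.2, h2.2.1⟩, ⟨h3.1, h3.2.2, h3.2.1⟩]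
    have e : {f : (ZMod 3)[X] // f.Monic ∧ Irreducible f ∧ f.natDegree = 2}
        ≃ ({X ^ 2 + C 0 * X + C 1, X ^ 2 + C 1 * X + C 2, X ^ 2 + C 2 * X + C 2} :
            Set (ZMod 3)[X]) :=
      Equiv.subtypeEquivRight (fun f => Set.ext_iff.mp hA f)
    rw [Nat.card_congr e, Nat.card_coe_set_eq,
      Set.ncard_insert_of_notMem (by
        intro hmem
        rcases Set.mem_insert_iff.mp hmem with h | h
        · exact hne12 h
        · exact hne13 (Set.mem_singleton_iff.mp h)), Set.ncard_pair hne23]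
  · have hB : {f : (ZMod 3)[X] | f.Monic ∧ Irreducible f ∧ f.natDegree = 2 ∧
        ∀ k : ℕ, Irreducible (Qtransform^[k] f)}
        = {X ^ 2 + C 1 * X + C 2, X ^ 2 + C 2 * X + C 2} := by
      ext q
      simp only [Set.mem_setOf_eq, Set.mem_insert_iff, Set.mem_singleton_iff]
      constructor
      · rintro ⟨hm, hirr, hdeg, hk⟩
        rcases mem_three hm hirr hdeg with rfl | rfl | rfl
        · exact absurd hk p1_fails
        · exact Or.inl rfl
        · exact Or.inr rfl
      · rintro (rfl | rfl)
        · exact ⟨h2.1, h2.2.2, h2.2.1, hfam 1 2 h2.1 h2.2.2 h2.2.1 hev2⟩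
        · exact ⟨h3.1, h3.2.2, h3.2.1, hfam 2 2 h3.1 h3.2.2 h3.2.1 hev3⟩
    have e : {f : (ZMod 3)[X] // f.Monic ∧ Irreducible f ∧ f.natDegree = 2 ∧
        ∀ k : ℕ, Irreducible (Qtransform^[k] f)}
        ≃ ({X ^ 2 + C 1 * X + C 2, X ^ 2 + C 2 * X + C 2} : Set (ZMod 3)[X]) :=
      Equiv.subtypeEquivRight (fun f => Set.ext_iff.mp hB f)
    rw [Nat.card_congr e, Nat.card_coe_set_eq, Set.ncard_pair hne23]
end

section
/- Over 𝔽₂, for every monic irreducible polynomial f of degree n with both trace conditions as in Meyn's theorem, the transform S(x) = x/(x²+1) (the Möbius-conjugate of the Q-transform) sends f to an irreducible polynomial of degree 2n: i.e., (x²+1)^n · f(x/(x²+1)) is irreducible whenever x^n · f((x²+1)/x) is. -/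
open Polynomial IntermediateField



/-- The S-transform for `S(x) = x/(x²+1)`, the Möbius conjugate of the Q-transform:
`(x²+1)^(deg f) · f(x/(x²+1)) = ∑ aᵢ xⁱ (x²+1)^(n-i)`. -/
noncomputable def Stransform {F : Type*} [Field F] (f : F[X]) : F[X] :=
  ∑ i ∈ Finset.range (f.natDegree + 1),
    C (f.coeff i) * X ^ i * (X ^ 2 + 1) ^ (f.natDegree - i)

section Aux

variable {F : Type*} [Field F]

lemma X_sq_one_monic : ((X ^ 2 + 1 : F[X])).Monic := by
  have := monic_X_pow_add_C (R := F) 1 (two_ne_zero)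
  simpa using this

lemma X_sq_one_natDegree : ((X ^ 2 + 1 : F[X])).natDegree = 2 := by
  have := natDegree_X_pow_add_C (R := F) (n := 2) (r := 1)
  simpa using this

lemma Stransform_natDegree_le (f : F[X]) :
    (Stransform f).natDegree ≤ 2 * f.natDegree := by
  refine natDegree_sum_le_of_forall_le _ _ fun i hi => ?_
  rw [Finset.mem_range, Nat.lt_succ_iff] at hi
  calc (C (f.coeff i) * X ^ i * (X ^ 2 + 1) ^ (f.natDegree - i)).natDegree
      ≤ (C (f.coeff i) * X ^ i).natDegree + ((X ^ 2 + 1 : F[X]) ^ (f.natDegree - i)).natDegree :=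
        natDegree_mul_le
    _ ≤ ((C (f.coeff i)).natDegree + (X ^ i : F[X]).natDegree)
          + ((X ^ 2 + 1 : F[X]) ^ (f.natDegree - i)).natDegree := by
        gcongr; exact natDegree_mul_le
    _ ≤ (0 + i) + (f.natDegree - i) * 2 := by
        gcongr
        · simp
        · simp
        · rw [natDegree_pow, X_sq_one_natDegree]
    _ ≤ 2 * f.natDegree := by omega

lemma Stransform_coeff_top (f : F[X]) :
    (Stransform f).coeff (2 * f.natDegree) = f.coeff 0 := by
  rw [Stransform, finset_sum_coeff]
  rw [Finset.sum_eq_single 0]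
  · have hm : ((X ^ 2 + 1 : F[X]) ^ f.natDegree).Monic := X_sq_one_monic.pow _
    have hd : ((X ^ 2 + 1 : F[X]) ^ f.natDegree).natDegree = 2 * f.natDegree := by
      rw [natDegree_pow, X_sq_one_natDegree]; ring
    simp only [pow_zero, mul_one, Nat.sub_zero]
    rw [coeff_C_mul, ← hd, hm.coeff_natDegree, mul_one]
  · intro i hi hi0
    rw [Finset.mem_range, Nat.lt_succ_iff] at hi
    apply coeff_eq_zero_of_natDegree_lt
    calc (C (f.coeff i) * X ^ i * (X ^ 2 + 1) ^ (f.natDegree - i)).natDegree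
        ≤ (C (f.coeff i) * X ^ i).natDegree + ((X ^ 2 + 1 : F[X]) ^ (f.natDegree - i)).natDegree :=
          natDegree_mul_le
      _ ≤ ((C (f.coeff i)).natDegree + (X ^ i : F[X]).natDegree)
            + (f.natDegree - i) * 2 := by
          gcongr
          · exact natDegree_mul_le
          · rw [natDegree_pow, X_sq_one_natDegree]
      _ ≤ (0 + i) + (f.natDegree - i) * 2 := by gcongr <;> simp
      _ < 2 * f.natDegree := by omega
  · intro h; simp at h

lemma aeval_Stransform {A : Type*} [CommRing A] [Algebra F A] (f : F[X]) (a b : A)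
    (hab : a * (b ^ 2 + 1) = b) :
    aeval b (Stransform f) = (b ^ 2 + 1) ^ f.natDegree * aeval a f := by
  rw [Stransform, map_sum, aeval_eq_sum_range, Finset.mul_sum]
  refine Finset.sum_congr rfl fun i hi => ?_
  rw [Finset.mem_range, Nat.lt_succ_iff] at hi
  have hb : b ^ i = a ^ i * (b ^ 2 + 1) ^ i := by rw [← mul_pow, hab]
  have h2 : (b ^ 2 + 1) ^ i * (b ^ 2 + 1) ^ (f.natDegree - i) = (b ^ 2 + 1) ^ f.natDegree := by
    rw [← pow_add, Nat.add_sub_cancel' hi]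
  rw [map_mul, map_mul, aeval_C, map_pow, aeval_X, map_pow, map_add, map_pow, aeval_X, map_one,
    Algebra.smul_def, hb]
  linear_combination (algebraMap F A (f.coeff i) * a ^ i) * h2

end Aux

set_option maxHeartbeats 1000000 in
set_option synthInstance.maxHeartbeats 400000 in
/-- Over `𝔽₂`, for every monic irreducible `f` of degree `n` satisfying
both trace conditions of Meyn's theorem (over `𝔽₂` the traces are the coefficients
themselves), the transform `S(x) = x/(x²+1)` sends `f` to an irreducible polynomial of
degree `2n`; indeed `(x²+1)^n · f(x/(x²+1))` is irreducible whenever `x^n · f((x²+1)/x)`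
is. -/
theorem stransform_irreducible_F2 (f : (ZMod 2)[X])
    (hmonic : f.Monic) (hirr : Irreducible f)
    (htr1 : f.coeff (f.natDegree - 1) = 1) (htr2 : f.coeff 1 / f.coeff 0 = 1) :
    (Irreducible (Qtransform f) → Irreducible (Stransform f)) ∧
      Irreducible (Stransform f) ∧ (Stransform f).natDegree = 2 * f.natDegree := by
  have hn1 : 0 < f.natDegree := hirr.natDegree_pos
  have hc0 : f.coeff 0 = 1 := by
    have h01 : ∀ x : ZMod 2, x ≠ 0 → x = 1 := by decide
    by_cases h : f.coeff 0 = 0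
    · rw [h, div_zero] at htr2; exact absurd htr2 (by decide)
    · exact h01 _ h
  -- degree and monicity of the S-transform
  have hScoeff : (Stransform f).coeff (2 * f.natDegree) = 1 := by
    rw [Stransform_coeff_top, hc0]
  have hSdeg : (Stransform f).natDegree = 2 * f.natDegree :=
    le_antisymm (Stransform_natDegree_le f)
      (le_natDegree_of_ne_zero (by rw [hScoeff]; exact one_ne_zero))
  have hSmonic : (Stransform f).Monic := by
    rw [Monic, leadingCoeff, hSdeg, hScoeff]
  -- set up the algebraic closure
  set Ω := AlgebraicClosure (ZMod 2) with hΩ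
  haveI : CharP Ω 2 := charP_of_injective_algebraMap (algebraMap (ZMod 2) Ω).injective 2
  obtain ⟨α, hα⟩ : ∃ a : Ω, aeval a f = 0 :=
    IsAlgClosed.exists_aeval_eq_zero Ω f (by
      rw [degree_eq_natDegree hmonic.ne_zero]
      simp only [ne_eq, Nat.cast_eq_zero]
      omega)
  have hα0 : α ≠ 0 := by
    rintro rfl
    rw [show (0:Ω) = algebraMap (ZMod 2) Ω 0 by simp, aeval_algebraMap_apply] at hα
    have : (aeval (0 : ZMod 2)) f = 0 := (algebraMap (ZMod 2) Ω).injective (by simpa using hα)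
    have heq : (aeval (0 : ZMod 2)) f = f.coeff 0 := by
      rw [coeff_zero_eq_eval_zero]; rfl
    rw [heq, hc0] at this
    exact one_ne_zero this
  have h2Ω : ∀ x : Ω, x + x = 0 := CharTwo.add_self_eq_zero
  obtain ⟨γ, hγroot⟩ := IsAlgClosed.exists_root (p := (X ^ 2 + X + C (α ^ 2) : Polynomial Ω)) (by
    have hd : (X ^ 2 + X + C (α ^ 2) : Polynomial Ω).degree = 2 := by
      have := degree_quadratic (a := (1:Ω)) (b := 1) (c := α ^ 2) one_ne_zero
      simpa using this
    rw [hd]; decide)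
  have hγ : γ ^ 2 + γ + α ^ 2 = 0 := by simpa [IsRoot] using hγroot
  set β : Ω := γ * α⁻¹ with hβdef
  have hαβγ : α * β = γ := by rw [hβdef]; rw [mul_comm γ, mul_inv_cancel_left₀ hα0]
  have hkey : α * (β ^ 2 + 1) = β := by
    apply mul_left_cancel₀ hα0
    rw [show α * β = γ from hαβγ]
    linear_combination (α * β + γ) * hαβγ + hγ - h2Ω γ
  have hb2 : β ^ 2 + 1 ≠ 0 := by
    intro h
    rw [h, mul_zero] at hkey
    rw [← hkey] at h
    simpa using h
  have hαβ : α = β * (β ^ 2 + 1)⁻¹ := by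
    rw [← div_eq_mul_inv, eq_div_iff hb2]
    linear_combination hkey
  have hgβ : aeval β (Stransform f) = 0 := by
    rw [aeval_Stransform f α β hkey, hα, mul_zero]
  have hαint : IsIntegral (ZMod 2) α := ⟨f, hmonic, hα⟩
  have hβint : IsIntegral (ZMod 2) β := ⟨Stransform f, hSmonic, hgβ⟩
  have hfmin : minpoly (ZMod 2) α = f := (minpoly.eq_of_irreducible_of_monic hirr hα hmonic).symm
  set K' := (ZMod 2)⟮α⟯ with hK'
  haveI : FiniteDimensional (ZMod 2) K' := adjoin.finiteDimensional hαint
  haveI : Finite K' := Module.finite_of_finite (ZMod 2)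
  haveI : CharP K' 2 := charP_of_injective_algebraMap (algebraMap (ZMod 2) K').injective 2
  haveI : ExpChar K' 2 := ExpChar.prime Nat.prime_two
  set α' := AdjoinSimple.gen (ZMod 2) α with hα'
  have htrgen : Algebra.trace (ZMod 2) K' α' = 1 := by
    have h := (adjoin.powerBasis hαint).trace_gen_eq_nextCoeff_minpoly
    rw [adjoin.powerBasis_gen, minpoly_gen, hfmin, nextCoeff_of_natDegree_pos hn1, htr1] at h
    rw [h]; decide
  have htrsq : ∀ x : K', Algebra.trace (ZMod 2) K' (x ^ 2) = Algebra.trace (ZMod 2) K' x := by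
    intro x
    let σ : K' ≃ₐ[ZMod 2] K' := AlgEquiv.ofRingEquiv (f := frobeniusEquiv K' 2)
      (fun c => by
        have : c = 0 ∨ c = 1 := by revert c; decide
        rcases this with rfl | rfl <;> simp)
    have := Algebra.trace_eq_of_algEquiv σ x
    rwa [show σ x = x ^ 2 from rfl] at this
  have hβK : β ∉ K' := by
    intro hβK
    have hγK : γ ∈ K' := by
      have hγβ : γ = β * α := by rw [hβdef]; rw [inv_mul_cancel_right₀ hα0]
      rw [hγβ]; exact mul_mem hβK (mem_adjoin_simple_self _ _)
    have hγ2 : (⟨γ, hγK⟩ : K') ^ 2 + ⟨γ, hγK⟩ = α' ^ 2 := by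
      apply Subtype.ext
      push_cast
      rw [show ((α' : K') : Ω) = α from rfl]
      linear_combination hγ - h2Ω (α ^ 2)
    have htr := congrArg (Algebra.trace (ZMod 2) K') hγ2
    rw [map_add, htrsq, htrsq, htrgen, CharTwo.add_self_eq_zero] at htr
    exact absurd htr (by decide)
  set q' : Polynomial K' := C 1 * X ^ 2 + C α'⁻¹ * X + C 1 with hq'
  have hq'monic : q'.Monic := by
    rw [Monic, hq', leadingCoeff_quadratic one_ne_zero]
  have hq'deg : q'.natDegree = 2 := natDegree_quadratic one_ne_zero
  have halgα : algebraMap K' Ω α' = α := AdjoinSimple.algebraMap_gen _ _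
  have hq'β : aeval β q' = 0 := by
    simp only [hq', map_add, map_mul, aeval_C, map_one, map_pow, aeval_X, one_mul, map_inv₀, halgα]
    linear_combination α⁻¹ * hkey - (β ^ 2 + 1) * inv_mul_cancel₀ hα0 + h2Ω (α⁻¹ * β)
  have hβintK : IsIntegral K' β := ⟨q', hq'monic, hq'β⟩
  have hβnr : β ∉ (algebraMap K' Ω).range := by
    rintro ⟨y, hy⟩
    exact hβK (by rw [← hy]; exact y.2)
  have hdeg2 : (minpoly K' β).natDegree = 2 := le_antisymm
    ((natDegree_le_of_dvd (minpoly.dvd _ _ hq'β) hq'monic.ne_zero).trans hq'deg.le)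
    ((minpoly.two_le_natDegree_iff hβintK).mpr hβnr)
  haveI : FiniteDimensional K' K'⟮β⟯ := adjoin.finiteDimensional hβintK
  have hfin2 : Module.finrank K' K'⟮β⟯ = 2 := by rw [adjoin.finrank hβintK, hdeg2]
  have hfinK' : Module.finrank (ZMod 2) K' = f.natDegree := by rw [adjoin.finrank hαint, hfmin]
  have hadj : restrictScalars (ZMod 2) K'⟮β⟯ = (ZMod 2)⟮β⟯ := by
    rw [hK', adjoin_adjoin_left]
    apply le_antisymm
    · rw [adjoin_le_iff]
      rintro x hx
      simp only [Set.mem_union, Set.mem_singleton_iff] at hx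
      rcases hx with rfl | rfl
      · rw [hαβ]
        exact mul_mem (mem_adjoin_simple_self _ _)
          (inv_mem (add_mem (pow_mem (mem_adjoin_simple_self _ _) 2) (one_mem _)))
      · exact mem_adjoin_simple_self _ _
    · exact adjoin.mono _ _ _ Set.subset_union_right
  have hfinβ : Module.finrank (ZMod 2) ((ZMod 2)⟮β⟯) = 2 * f.natDegree := by
    rw [← hadj]
    have ht : Module.finrank (ZMod 2) K' * Module.finrank K' K'⟮β⟯
        = Module.finrank (ZMod 2) (restrictScalars (ZMod 2) K'⟮β⟯) :=
      Module.finrank_mul_finrank (ZMod 2) K' K'⟮β⟯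
    rw [← ht, hfin2, hfinK']; ring
  have hdegm : (minpoly (ZMod 2) β).natDegree = 2 * f.natDegree := by
    rw [← adjoin.finrank hβint]; exact hfinβ
  have hgm : Stransform f = minpoly (ZMod 2) β :=
    eq_of_monic_of_dvd_of_natDegree_le (minpoly.monic hβint) hSmonic
      (minpoly.dvd _ _ hgβ) (by rw [hSdeg, hdegm])
  have hSirr : Irreducible (Stransform f) := hgm ▸ minpoly.irreducible hβint
  exact ⟨fun _ => hSirr, hSirr, hSdeg⟩
end
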